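/- Let X be a real n×q matrix, y ∈ ℝⁿ, and λ ≥ 0. If β̂ ∈ ℝ^q is a minimizer of the lasso objective β ↦ (1/2)‖y − Xβ‖₂² + λ‖β‖₁ over ℝ^q, then ‖Xᵀ(y − Xβ̂)‖_{ℓ∞} ≤ λ; that is, every lasso solution is feasible for the Dantzig selector constraint set with the same parameter λ. -/
import Mathlib


open Matrix

/-- Every lasso solution is feasible for the Dantzig selector constraint set with
the same parameter: if `β̂` minimizes `(1/2)‖y - Xβ‖₂² + λ‖β‖₁`, then
`‖Xᵀ(y - Xβ̂)‖_{ℓ∞} ≤ λ`. -/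
theorem lasso_solution_mem_dantzig_constraint
    (n q : ℕ) (X : Matrix (Fin n) (Fin q) ℝ) (y : Fin n → ℝ)
    (lam : ℝ) (hlam : 0 ≤ lam) (βhat : Fin q → ℝ)
    (hmin : ∀ β : Fin q → ℝ,
      (1 / 2) * (∑ i, (y i - X.mulVec βhat i) ^ 2) + lam * ∑ j, |βhat j| ≤
      (1 / 2) * (∑ i, (y i - X.mulVec β i) ^ 2) + lam * ∑ j, |β j|) :
    ∀ j, |Xᵀ.mulVec (y - X.mulVec βhat) j| ≤ lam := by
  intro j
  set c : ℝ := Xᵀ.mulVec (y - X.mulVec βhat) j with hcdef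
  have hc : c = ∑ i, X i j * (y i - X.mulVec βhat i) := by
    simp [hcdef, Matrix.mulVec, dotProduct, Matrix.transpose_apply]
  set A : ℝ := ∑ i, (X i j) ^ 2 with hAdef
  have hA0 : 0 ≤ A := Finset.sum_nonneg fun i _ => sq_nonneg _
  have key : ∀ t : ℝ, t * c ≤ t ^ 2 * A / 2 + lam * |t| := by
    intro t
    have h := hmin (βhat + t • (Pi.single j 1 : Fin q → ℝ))
    have hmv : ∀ i, X.mulVec (βhat + t • (Pi.single j 1 : Fin q → ℝ)) i
        = X.mulVec βhat i + t * X i j := by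
      intro i
      simp [Matrix.mulVec_add, Matrix.mulVec_smul, Matrix.mulVec_single,
        mul_comm]
    have expand : (∑ i, (y i - X.mulVec (βhat + t • (Pi.single j 1 : Fin q → ℝ)) i) ^ 2)
        = (∑ i, (y i - X.mulVec βhat i) ^ 2) - 2 * t * c + t ^ 2 * A := by
      have step : ∀ i ∈ Finset.univ,
          (y i - X.mulVec (βhat + t • (Pi.single j 1 : Fin q → ℝ)) i) ^ 2
          = (y i - X.mulVec βhat i) ^ 2
            - 2 * t * (X i j * (y i - X.mulVec βhat i))
            + t ^ 2 * (X i j) ^ 2 := by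
        intro i _
        rw [hmv i]; ring
      rw [Finset.sum_congr rfl step, Finset.sum_add_distrib,
        Finset.sum_sub_distrib, ← Finset.mul_sum, ← Finset.mul_sum, hc, hAdef]
    have habs : (∑ k, |(βhat + t • (Pi.single j 1 : Fin q → ℝ)) k|)
        ≤ (∑ k, |βhat k|) + |t| := by
      have hb : ∀ k ∈ Finset.univ,
          |(βhat + t • (Pi.single j 1 : Fin q → ℝ)) k|
          ≤ |βhat k| + (if k = j then |t| else 0) := by
        intro k _
        by_cases hk : k = j
        · subst hk
          simp only [Pi.add_apply, Pi.smul_apply, Pi.single_eq_same,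
            smul_eq_mul, mul_one, if_pos rfl]
          exact abs_add_le _ _
        · simp [Pi.single_apply, hk]
      calc (∑ k, |(βhat + t • (Pi.single j 1 : Fin q → ℝ)) k|)
          ≤ ∑ k, (|βhat k| + (if k = j then |t| else 0)) :=
            Finset.sum_le_sum hb
        _ = (∑ k, |βhat k|) + |t| := by
            rw [Finset.sum_add_distrib]
            simp
    rw [expand] at h
    have h2 : lam * (∑ k, |(βhat + t • (Pi.single j 1 : Fin q → ℝ)) k|)
        ≤ lam * ((∑ k, |βhat k|) + |t|) := mul_le_mul_of_nonneg_left habs hlam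
    nlinarith [h, h2]
  by_contra hcon
  push_neg at hcon
  set ε : ℝ := (|c| - lam) / (A + 1) with hεdef
  have hεpos : 0 < ε := by
    apply div_pos (by linarith) (by linarith)
  have h1 := key ε
  have h2 := key (-ε)
  have habsε : |ε| = ε := abs_of_pos hεpos
  have habsnε : |(-ε)| = ε := by rw [abs_neg, habsε]
  rw [habsε] at h1
  rw [habsnε] at h2
  have hεc : ε * |c| ≤ ε ^ 2 * A / 2 + lam * ε := by
    rcases abs_cases c with ⟨hcc, _⟩ | ⟨hcc, _⟩
    · rw [hcc]; exact h1
    · rw [hcc]; nlinarith [h2]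
  have hεval : ε * (A + 1) = |c| - lam := by
    rw [hεdef]; field_simp
  nlinarith [hεpos, hA0, hεc, hεval]
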